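/- Fix q ∈ (0,1) and let δ_M = (M/(M-1)) · Σ_{k=2}^{M} ((k-1)/k)·C(M,k) q^k (1-q)^{M-k} for M ≥ 2. Then the sequence M(1 - δ_M) is bounded; in particular 0 ≤ M(1 - δ_M) ≤ (M/(M-1))·[M(1-q)^M + 2M/((M+1)q)] - M/(M-1) + M, and hence 1 - δ_M = O(1/M) as M → ∞. -/

import Mathlib

open Finset

set_option maxHeartbeats 1000000 in
/-- For fixed `q ∈ (0,1)` and
`δ_M = (M/(M-1)) ∑_{k=2}^{M} ((k-1)/k) C(M,k) qᵏ (1-q)^{M-k}` (`M ≥ 2`),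
the sequence `M(1 - δ_M)` is bounded; in particular
`0 ≤ M(1 - δ_M) ≤ (M/(M-1))·(M(1-q)^M + 2M/((M+1)q)) - M/(M-1) + M`,
and hence `1 - δ_M = O(1/M)` as `M → ∞`. -/
theorem binomial_delta_one_sub_bigO (q : ℝ) (hq : q ∈ Set.Ioo (0 : ℝ) 1) (δ : ℕ → ℝ)
    (hδ : ∀ M, 2 ≤ M → δ M = ((M : ℝ) / ((M : ℝ) - 1)) *
        ∑ k ∈ Finset.Icc 2 M,
          (((k : ℝ) - 1) / (k : ℝ)) * (M.choose k) * q ^ k * (1 - q) ^ (M - k)) :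
    (∃ C : ℝ, ∀ M : ℕ, 2 ≤ M → |(M : ℝ) * (1 - δ M)| ≤ C) ∧
    (∀ M : ℕ, 2 ≤ M →
      0 ≤ (M : ℝ) * (1 - δ M) ∧
      (M : ℝ) * (1 - δ M) ≤
        ((M : ℝ) / ((M : ℝ) - 1)) * ((M : ℝ) * (1 - q) ^ M + 2 * (M : ℝ) / (((M : ℝ) + 1) * q))
          - (M : ℝ) / ((M : ℝ) - 1) + (M : ℝ)) ∧
    (∃ C : ℝ, ∀ M : ℕ, 2 ≤ M → |1 - δ M| ≤ C / (M : ℝ)) := by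
  obtain ⟨hq0, hq1⟩ := hq
  have hq1' : 0 < 1 - q := by linarith
  have main : ∀ M : ℕ, 2 ≤ M →
      0 ≤ (M : ℝ) * (1 - δ M) ∧ (M : ℝ) * (1 - δ M) ≤ 6 / q ∧
      (M : ℝ) * (1 - δ M) ≤
        ((M : ℝ) / ((M : ℝ) - 1)) * ((M : ℝ) * (1 - q) ^ M + 2 * (M : ℝ) / (((M : ℝ) + 1) * q))
          - (M : ℝ) / ((M : ℝ) - 1) + (M : ℝ) := by
    intro M hM
    have hM2 : (2:ℝ) ≤ (M:ℝ) := by exact_mod_cast hM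
    have hMpos : (0:ℝ) < M := by linarith
    have hM1 : (0:ℝ) < (M:ℝ) - 1 := by linarith
    set t : ℝ := (1 - q) ^ M with ht
    have ht0 : 0 < t := pow_pos hq1' M
    have ht1 : t ≤ 1 := pow_le_one₀ hq1'.le (by linarith)
    set p : ℕ → ℝ := fun k => (M.choose k : ℝ) * q ^ k * (1 - q) ^ (M - k) with hp
    have hpnn : ∀ k, 0 ≤ p k := fun k => by
      simp only [hp]; positivity
    have hsum : ∑ k ∈ range (M + 1), p k = 1 := by
      have h1 : q + (1 - q) = 1 := by ring
      have h := add_pow q (1 - q) M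
      rw [h1, one_pow] at h
      calc ∑ k ∈ range (M + 1), p k
          = ∑ k ∈ range (M + 1), q ^ k * (1 - q) ^ (M - k) * (M.choose k : ℝ) :=
            Finset.sum_congr rfl fun k _ => by simp only [hp]; ring
        _ = 1 := h.symm
    set E : ℝ := ∑ k ∈ Icc 1 M, (1 / (k : ℝ)) * p k with hE
    have hp0 : p 0 = t := by simp [hp, ht]
    have hsum1 : ∑ k ∈ Icc 1 M, p k = 1 - t := by
      have h1 : ∑ k ∈ range (M + 1), p k = p 0 + ∑ k ∈ Icc 1 M, p k := by
        rw [range_eq_Ico, Finset.sum_eq_sum_Ico_succ_bot (by omega) p, Finset.Ico_add_one_right_eq_Icc]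
      rw [h1, hp0] at hsum
      linarith
    -- the key identity for δ
    have hδid : δ M = ((M : ℝ) / ((M : ℝ) - 1)) * (1 - t - E) := by
      rw [hδ M hM]
      congr 1
      have step1 : ∑ k ∈ Icc 2 M,
          (((k : ℝ) - 1) / (k : ℝ)) * (M.choose k) * q ^ k * (1 - q) ^ (M - k)
          = ∑ k ∈ Icc 1 M, (((k : ℝ) - 1) / (k : ℝ)) * p k := by
        rw [Finset.sum_subset (Finset.Icc_subset_Icc_left one_le_two)]
        · exact Finset.sum_congr rfl fun k _ => by simp only [hp]; ring
        · intro k hk hk2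
          have hk1 : k = 1 := by
            simp only [Finset.mem_Icc] at hk hk2
            omega
          simp [hk1]
      rw [step1]
      have step2 : ∀ k ∈ Icc 1 M, (((k : ℝ) - 1) / (k : ℝ)) * p k
          = p k - (1 / (k : ℝ)) * p k := by
        intro k hk
        have hk1 : 1 ≤ k := (Finset.mem_Icc.mp hk).1
        have hk0 : (k : ℝ) ≠ 0 := by
          have : (0:ℝ) < k := by exact_mod_cast hk1
          linarith
        field_simp
      rw [Finset.sum_congr rfl step2, Finset.sum_sub_distrib, hsum1, hE]
    -- lower bound on E
    have hElow : 1 - t ≤ (M : ℝ) * E := by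
      have h1 : (1 - t) / (M : ℝ) ≤ E := by
        rw [← hsum1, Finset.sum_div, hE]
        apply Finset.sum_le_sum
        intro k hk
        obtain ⟨hk1, hkM⟩ := Finset.mem_Icc.mp hk
        have hk0 : (0:ℝ) < k := by exact_mod_cast hk1
        have h2 : p k / (M : ℝ) = (1 / (M : ℝ)) * p k := by ring
        rw [h2]
        exact mul_le_mul_of_nonneg_right
          (one_div_le_one_div_of_le hk0 (by exact_mod_cast hkM)) (hpnn k)
      rw [div_le_iff₀ hMpos] at h1
      linarith
    -- upper bound on E
    have hEup : E ≤ 2 / (((M : ℝ) + 1) * q) := by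
      set g : ℕ → ℝ := fun j => ((M + 1).choose j : ℝ) * q ^ j * (1 - q) ^ (M + 1 - j) with hg
      have hgnn : ∀ j, 0 ≤ g j := fun j => by simp only [hg]; positivity
      have hgsum : ∑ j ∈ range (M + 2), g j = 1 := by
        have h1 : q + (1 - q) = 1 := by ring
        have h := add_pow q (1 - q) (M + 1)
        rw [h1, one_pow] at h
        calc ∑ j ∈ range (M + 2), g j
            = ∑ j ∈ range (M + 1 + 1), q ^ j * (1 - q) ^ (M + 1 - j) * ((M + 1).choose j : ℝ) :=
              Finset.sum_congr rfl fun j _ => by simp only [hg]; ring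
          _ = 1 := h.symm
      have hterm : ∀ k ∈ Icc 1 M,
          (1 / (k : ℝ)) * p k ≤ (2 / (((M : ℝ) + 1) * q)) * g (k + 1) := by
        intro k hk
        obtain ⟨hk1, hkM⟩ := Finset.mem_Icc.mp hk
        have hk0 : (0:ℝ) < k := by exact_mod_cast hk1
        have hk1' : (1:ℝ) ≤ (k : ℝ) := by exact_mod_cast hk1
        have hchoose : ((M + 1).choose (k + 1) : ℝ) * ((k : ℝ) + 1)
            = ((M : ℝ) + 1) * (M.choose k : ℝ) := by
          have h := Nat.add_one_mul_choose_eq M k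
          have h' := congrArg (fun n : ℕ => (n : ℝ)) h
          push_cast at h'
          linarith
        have hgk : g (k + 1) = ((M + 1).choose (k + 1) : ℝ) * q * q ^ k * (1 - q) ^ (M - k) := by
          simp only [hg]
          rw [show M + 1 - (k + 1) = M - k by omega, pow_succ]
          ring
        set A : ℝ := q ^ k * (1 - q) ^ (M - k) with hA
        have hA0 : 0 ≤ A := by simp only [hA]; positivity
        have hC' : (0:ℝ) ≤ ((M + 1).choose (k + 1) : ℝ) := by positivity
        have hMq : (0:ℝ) < ((M : ℝ) + 1) * q := by positivity
        have h1 : (1 / (k : ℝ)) * p k = ((M.choose k : ℝ) * A) / (k : ℝ) := by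
          simp only [hp, hA]; ring
        have h2 : (2 / (((M : ℝ) + 1) * q)) * g (k + 1)
            = (2 * ((M + 1).choose (k + 1) : ℝ) * A) / ((M : ℝ) + 1) := by
          rw [hgk]
          field_simp [hA]
          ring
        rw [h1, h2, div_le_div_iff₀ hk0 (by linarith : (0:ℝ) < (M : ℝ) + 1)]
        nlinarith [mul_le_mul_of_nonneg_right hchoose.le hA0,
          mul_le_mul_of_nonneg_right hchoose.ge hA0,
          mul_nonneg (mul_nonneg hC' hA0) (by linarith : (0:ℝ) ≤ (k : ℝ) - 1)]
      have hsub : ∑ k ∈ Icc 1 M, g (k + 1) ≤ 1 := by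
        have h1 : ∑ k ∈ Icc 1 M, g (k + 1) = ∑ j ∈ Icc 2 (M + 1), g j := by
          rw [show Icc 2 (M + 1) = Finset.map (addRightEmbedding 1) (Icc 1 M) from
            (Finset.map_add_right_Icc 1 M 1).symm, Finset.sum_map]
          rfl
        rw [h1, ← hgsum]
        apply Finset.sum_le_sum_of_subset_of_nonneg
        · intro j hj
          simp only [Finset.mem_Icc] at hj
          simp only [Finset.mem_range]
          omega
        · exact fun j _ _ => hgnn j
      calc E ≤ ∑ k ∈ Icc 1 M, (2 / (((M : ℝ) + 1) * q)) * g (k + 1) :=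
            Finset.sum_le_sum hterm
        _ = (2 / (((M : ℝ) + 1) * q)) * ∑ k ∈ Icc 1 M, g (k + 1) := by
            rw [Finset.mul_sum]
        _ ≤ (2 / (((M : ℝ) + 1) * q)) * 1 := by
            apply mul_le_mul_of_nonneg_left hsub
            positivity
        _ = 2 / (((M : ℝ) + 1) * q) := by ring
    have hEnn : 0 ≤ E := Finset.sum_nonneg fun k hk => by
      have hk1 := (Finset.mem_Icc.mp hk).1
      have : (0:ℝ) ≤ 1 / (k : ℝ) := by positivity
      exact mul_nonneg this (hpnn k)
    -- Bernoulli: M * t * q ≤ 1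
    have hMt : (M : ℝ) * t ≤ 1 / q := by
      have hb := one_add_mul_le_pow (a := q / (1 - q))
        (by have h0 : (0:ℝ) ≤ q / (1 - q) := by positivity
            linarith) M
      have h1 : 1 + q / (1 - q) = 1 / (1 - q) := by field_simp; ring
      rw [h1, div_pow, one_pow, ← ht] at hb
      have h3 : (M : ℝ) * q ≤ 1 + (M : ℝ) * (q / (1 - q)) := by
        have h4 : q ≤ q / (1 - q) := by
          rw [le_div_iff₀ hq1']
          nlinarith
        nlinarith
      have h4 : (M : ℝ) * q ≤ 1 / t := le_trans h3 hb
      rw [le_div_iff₀ hq0]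
      calc (M : ℝ) * t * q = ((M : ℝ) * q) * t := by ring
        _ ≤ (1 / t) * t := mul_le_mul_of_nonneg_right h4 ht0.le
        _ = 1 := by field_simp
    -- the identity for M(1-δ)
    have hId : (M : ℝ) * (1 - δ M)
        = ((M : ℝ) / ((M : ℝ) - 1)) * ((M : ℝ) * t + (M : ℝ) * E) - (M : ℝ) / ((M : ℝ) - 1) := by
      rw [hδid]
      field_simp
      ring
    have hc : 0 < (M : ℝ) / ((M : ℝ) - 1) := div_pos hMpos hM1
    have hcle : (M : ℝ) / ((M : ℝ) - 1) ≤ 2 := by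
      rw [div_le_iff₀ hM1]; linarith
    have hMEup : (M : ℝ) * E ≤ 2 * (M : ℝ) / (((M : ℝ) + 1) * q) := by
      have := mul_le_mul_of_nonneg_left hEup hMpos.le
      calc (M : ℝ) * E ≤ (M : ℝ) * (2 / (((M : ℝ) + 1) * q)) := this
        _ = 2 * (M : ℝ) / (((M : ℝ) + 1) * q) := by ring
    have hMEup2 : (M : ℝ) * E ≤ 2 / q := by
      have h1 : 2 * (M : ℝ) / (((M : ℝ) + 1) * q) ≤ 2 / q := by
        rw [div_le_div_iff₀ (by positivity) hq0]
        nlinarith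
      linarith
    refine ⟨?_, ?_, ?_⟩
    · -- nonnegativity
      rw [hId]
      have h1 : (1:ℝ) ≤ (M : ℝ) * t + (M : ℝ) * E := by nlinarith
      nlinarith [mul_le_mul_of_nonneg_left h1 hc.le]
    · -- bounded by 6/q
      rw [hId]
      have h1 : (M : ℝ) * t + (M : ℝ) * E ≤ 3 / q := by
        have : 1 / q + 2 / q = 3 / q := by ring
        linarith
      have h2 : 0 ≤ (M : ℝ) * t + (M : ℝ) * E := by positivity
      have h3 : ((M : ℝ) / ((M : ℝ) - 1)) * ((M : ℝ) * t + (M : ℝ) * E) ≤ 2 * (3 / q) := by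
        calc ((M : ℝ) / ((M : ℝ) - 1)) * ((M : ℝ) * t + (M : ℝ) * E)
            ≤ 2 * ((M : ℝ) * t + (M : ℝ) * E) := mul_le_mul_of_nonneg_right hcle h2
          _ ≤ 2 * (3 / q) := by linarith
      have h4 : 2 * (3 / q) = 6 / q := by ring
      linarith
    · -- the explicit bound
      rw [hId]
      have h1 : (M : ℝ) * t + (M : ℝ) * E ≤ (M : ℝ) * t + 2 * (M : ℝ) / (((M : ℝ) + 1) * q) := by
        linarith
      have h2 := mul_le_mul_of_nonneg_left h1 hc.le
      linarith
  refine ⟨⟨6 / q, fun M hM => ?_⟩, fun M hM => ⟨(main M hM).1, (main M hM).2.2⟩,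
    ⟨6 / q, fun M hM => ?_⟩⟩
  · obtain ⟨h0, h6, _⟩ := main M hM
    rw [abs_of_nonneg h0]
    exact h6
  · obtain ⟨h0, h6, _⟩ := main M hM
    have hM2 : (2:ℝ) ≤ (M:ℝ) := by exact_mod_cast hM
    have hMpos : (0:ℝ) < M := by linarith
    have h1 : 0 ≤ 1 - δ M := by nlinarith
    rw [abs_of_nonneg h1, le_div_iff₀ hMpos]
    linarith
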